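/- arXiv:1705.09429 — 2 statements merged into one kernel-verified Lean document; each statement's English description precedes it below -/
import Mathlib

section
/- Let (δ_s,𝒢) be an ICSIE instance and let (0,𝒢̄) be the instance obtained by replacing each side information set 𝒳_i by a subset 𝒳̄_i ⊆ 𝒳_i with |𝒳_i \ 𝒳̄_i| ≤ 2δ_s^(i) and setting all error resistance capabilities to 0 (messages and wanted sets unchanged). Then I(q,𝒢̄,0) ⊆ I(q,𝒢,δ_s), and consequently every valid (δ_s,𝒢)-ICSIE encoding is a valid (0,𝒢̄)-ICSIE encoding. -/
open Finset

/-- Restriction of a vector to the coordinates in a finite index set. -/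
def proj {ι 𝔽 : Type*} (A : Finset ι) (x : ι → 𝔽) : {a // a ∈ A} → 𝔽 :=
  fun a => x a.1

/-- `enc` is a valid (δ,𝒢)-ICSIE encoding: decoders exist recovering the wanted
messages from the codeword and side information with at most `δ r` errors. -/
def ValidEnc (𝔽 : Type*) [DecidableEq 𝔽] {ι R C : Type*}
    (X f : R → Finset ι) (δ : R → ℕ) (enc : (ι → 𝔽) → C) : Prop :=
  ∃ D : (r : R) → C → ({a // a ∈ X r} → 𝔽) → ({a // a ∈ f r} → 𝔽),
    ∀ (r : R) (x : ι → 𝔽) (xt : {a // a ∈ X r} → 𝔽),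
      hammingDist (proj (X r) x) xt ≤ δ r → D r (enc x) xt = proj (f r) x

/-- The set I(q,𝒢,δ_s). -/
def ISet (𝔽 : Type*) [Zero 𝔽] [DecidableEq 𝔽] {ι R : Type*}
    (X f : R → Finset ι) (δ : R → ℕ) : Set (ι → 𝔽) :=
  {Z | ∃ r : R, hammingNorm (proj (X r) Z) ≤ 2 * δ r ∧ proj (f r) Z ≠ 0}

lemma proj_sub {ι 𝔽 : Type*} [Ring 𝔽] (A : Finset ι) (x y : ι → 𝔽) :
    proj A (x - y) = proj A x - proj A y := rfl

lemma valid_sep {𝔽 : Type*} [Field 𝔽] [Fintype 𝔽] [DecidableEq 𝔽]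
    {n m : ℕ} {C : Type*} (X f : Fin m → Finset (Fin n)) (δ : Fin m → ℕ)
    (enc : (Fin n → 𝔽) → C) (hv : ValidEnc 𝔽 X f δ enc) :
    ∀ x x' : Fin n → 𝔽, (x - x') ∈ ISet 𝔽 X f δ → enc x ≠ enc x' := by
  obtain ⟨D, hD⟩ := hv
  rintro x x' ⟨r, hnorm, hf⟩ heq
  classical
  set S : Finset {a // a ∈ X r} := univ.filter (fun a => x a.1 ≠ x' a.1) with hS
  have hScard : S.card ≤ 2 * δ r := by
    have : hammingNorm (proj (X r) (x - x')) = S.card := by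
      unfold hammingNorm
      congr 1
      apply Finset.filter_congr
      intro a _
      simp [proj, sub_ne_zero]
    omega
  obtain ⟨T, hTS, hTcard⟩ := Finset.exists_subset_card_eq (min_le_left S.card (δ r))
  set xt : {a // a ∈ X r} → 𝔽 := fun a => if a ∈ T then x' a.1 else x a.1 with hxt
  have h1 : hammingDist (proj (X r) x) xt ≤ δ r := by
    have : (univ.filter fun a => proj (X r) x a ≠ xt a) ⊆ T := by
      intro a ha
      simp only [mem_filter, mem_univ, true_and, hxt, proj] at ha
      by_contra hT
      simp [hT] at ha
    calc hammingDist (proj (X r) x) xt ≤ T.card := Finset.card_le_card this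
    _ ≤ δ r := by omega
  have h2 : hammingDist (proj (X r) x') xt ≤ δ r := by
    have : (univ.filter fun a => proj (X r) x' a ≠ xt a) ⊆ S \ T := by
      intro a ha
      simp only [mem_filter, mem_univ, true_and, hxt, proj] at ha
      by_cases hT : a ∈ T
      · simp [hT] at ha
      · simp only [hT, if_false] at ha
        simp [Finset.mem_sdiff, hS, hT, Ne.symm ha]
    have hsd : (S \ T).card ≤ δ r := by
      have := Finset.card_sdiff_of_subset hTS
      omega
    calc hammingDist (proj (X r) x') xt ≤ (S \ T).card := Finset.card_le_card this
    _ ≤ δ r := hsd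
  have e1 := hD r x xt h1
  have e2 := hD r x' xt h2
  rw [heq] at e1
  apply hf
  rw [proj_sub, e1.symm.trans e2, sub_self]


/-- shrinking each side information set `𝒳_i` to `𝒳̄_i ⊆ 𝒳_i`
with `|𝒳_i \ 𝒳̄_i| ≤ 2δ_s^(i)` and setting all capabilities to 0 yields
`I(q,𝒢̄,0) ⊆ I(q,𝒢,δ_s)`; consequently every valid (δ_s,𝒢)-ICSIE encoding is a
valid (0,𝒢̄)-ICSIE encoding. -/
theorem ISet_subset_and_valid_of_shrink
    {𝔽 : Type*} [Field 𝔽] [Fintype 𝔽] [DecidableEq 𝔽]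
    {n m : ℕ} (X Xbar f : Fin m → Finset (Fin n)) (δ : Fin m → ℕ)
    (hdisj : ∀ i, Disjoint (f i) (X i))
    (hsub : ∀ i, Xbar i ⊆ X i)
    (hcard : ∀ i, (X i \ Xbar i).card ≤ 2 * δ i) :
    ISet 𝔽 Xbar f (fun _ => 0) ⊆ ISet 𝔽 X f δ
    ∧ ∀ (N : ℕ) (enc : (Fin n → 𝔽) → (Fin N → 𝔽)),
        ValidEnc 𝔽 X f δ enc → ValidEnc 𝔽 Xbar f (fun _ => 0) enc := by
  classical
  have hsubset : ISet 𝔽 Xbar f (fun _ => 0) ⊆ ISet 𝔽 X f δ := by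
    rintro Z ⟨r, hnorm, hf⟩
    refine ⟨r, ?_, hf⟩
    have hz : proj (Xbar r) Z = 0 := by
      rw [← hammingNorm_eq_zero]
      have h0 : hammingNorm (proj (Xbar r) Z) ≤ 0 := by simpa using hnorm
      omega
    have hz' : ∀ a ∈ Xbar r, Z a = 0 := fun a ha => congrFun hz ⟨a, ha⟩
    calc hammingNorm (proj (X r) Z)
        ≤ (X r \ Xbar r).card := by
          apply Finset.card_le_card_of_injOn (fun a => a.1)
          · intro a ha
            simp only [Finset.mem_coe, mem_filter, mem_univ, true_and] at ha
            show a.1 ∈ X r \ Xbar r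
            simp only [Finset.mem_sdiff]
            refine ⟨a.2, fun hb => ha ?_⟩
            exact hz' a.1 hb
          · intro a _ b _ h
            exact Subtype.ext h
      _ ≤ 2 * δ r := hcard r
  refine ⟨hsubset, fun N enc hv => ?_⟩
  have hsep := valid_sep X f δ enc hv
  refine ⟨fun r c xt =>
    if h : ∃ x, enc x = c ∧ proj (Xbar r) x = xt then proj (f r) h.choose
    else fun _ => 0, ?_⟩
  intro r x xt hdist
  have hxt : proj (Xbar r) x = xt := by
    rw [← hammingDist_eq_zero]
    have h0 : hammingDist (proj (Xbar r) x) xt ≤ 0 := by simpa using hdist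
    omega
  have h : ∃ x', enc x' = enc x ∧ proj (Xbar r) x' = xt := ⟨x, rfl, hxt⟩
  simp only [h, dif_pos]
  obtain ⟨he, hp⟩ := h.choose_spec
  set x' := h.choose
  by_contra hne
  apply hsep x' x _ he
  apply hsubset
  refine ⟨r, ?_, ?_⟩
  · have : proj (Xbar r) (x' - x) = 0 := by
      rw [proj_sub, hp, hxt, sub_self]
    rw [this]
    simp
  · rw [proj_sub, sub_ne_zero]
    exact hne
end

section
/- Let (𝔾,δ) be a network coding instance. For a non-source node v ∈ V \ S̄, set δ_v = min{δ_e : e an outgoing link of v} if v ∉ T, and δ_v = δ_t if v = t ∈ T. Suppose a (δ,𝔾)-NCLE exists. Then for every choice of subsets D_v of the incoming links of v with |D_v| ≤ min(2δ_v, |In(v)|) for each non-source node v, the network coding instance 𝔾′ obtained from 𝔾 by deleting the chosen links from each In(v) — i.e., replacing In(e) by In(e) \ D_{tail(e)} for every link e with tail(e) ∉ S̄, and In(t) by In(t) \ D_t for every terminal t — admits a conventional network code, i.e., a (0,𝔾′)-NCLE in which all error resistance capabilities equal 0. -/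
open Finset

/-- The input index set `In(e)` of a link `e`: the source messages assigned to
`tail e` if `tail e` is a source node, and the incoming links of `tail e`
otherwise. -/
def linkIn {V E S : Type*} [Fintype E] [Fintype S] [DecidableEq V]
    [DecidableEq S] [DecidableEq E]
    (tail head : E → V) (Sbar : Finset V) (assign : S → V) (e : E) :
    Finset (S ⊕ E) :=
  if tail e ∈ Sbar then
    (Finset.univ.filter fun s : S => assign s = tail e).image Sum.inl
  else
    (Finset.univ.filter fun e' : E => head e' = tail e).image Sum.inr

/-- The input index set `In(t)` of a terminal `t`: its incoming links. -/
def termIn {V E S : Type*} [Fintype E] [DecidableEq V] [DecidableEq S] [DecidableEq E]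
    (head : E → V) (t : V) : Finset (S ⊕ E) :=
  (Finset.univ.filter fun e' : E => head e' = t).image Sum.inr

/-- `(Fenc, Ddec)` is a (δ,𝔾)-NCLE (with input sets `In_`, `InT_`):
for every consistent assignment `x` of message and link symbols, every link
encoder outputs the correct link symbol from inputs with at most `δE e` symbol
errors, and every terminal decoder outputs its demanded source symbols from
inputs with at most `δT t` symbol errors. -/
def IsNCLE (𝔽 : Type*) [DecidableEq 𝔽] {V E S : Type*}
    (In_ : E → Finset (S ⊕ E)) (InT_ : V → Finset (S ⊕ E))
    (Term : Finset V) (Fdem : V → Finset S) (δE : E → ℕ) (δT : V → ℕ)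
    (Fenc : (e : E) → ({a // a ∈ In_ e} → 𝔽) → 𝔽)
    (Ddec : (t : {v // v ∈ Term}) → ({a // a ∈ InT_ t.1} → 𝔽) →
      ({s // s ∈ Fdem t.1} → 𝔽)) : Prop :=
  ∀ x : S ⊕ E → 𝔽, (∀ e : E, x (Sum.inr e) = Fenc e (proj (In_ e) x)) →
    (∀ (e : E) (yt : {a // a ∈ In_ e} → 𝔽),
        hammingDist (proj (In_ e) x) yt ≤ δE e → Fenc e yt = x (Sum.inr e)) ∧
    (∀ (t : {v // v ∈ Term}) (yt : {a // a ∈ InT_ t.1} → 𝔽),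
        hammingDist (proj (InT_ t.1) x) yt ≤ δT t.1 →
        Ddec t yt = fun s : {s // s ∈ Fdem t.1} => x (Sum.inl s.1))

/-- The incoming links of a node. -/
def inLinks {V E : Type*} [Fintype E] [DecidableEq V] (head : E → V) (v : V) :
    Finset E :=
  Finset.univ.filter fun e' : E => head e' = v

section Aux

lemma head_eq_of_inr_mem_linkIn {V E S : Type*} [Fintype E] [Fintype S] [DecidableEq V]
    [DecidableEq S] [DecidableEq E] (tail head : E → V) (Sbar : Finset V) (assign : S → V)
    {e e' : E} (h : Sum.inr e' ∈ linkIn tail head Sbar assign e) : head e' = tail e := by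
  unfold linkIn at h
  split at h <;> simp [Finset.mem_image, Finset.mem_filter] at h
  exact h

noncomputable def runCode {V E S 𝔽 : Type*} [Fintype E] [Fintype S] [DecidableEq V]
    [DecidableEq S] [DecidableEq E]
    (tail head : E → V) (Sbar : Finset V) (assign : S → V)
    (Fenc : (e : E) → ({a // a ∈ linkIn tail head Sbar assign e} → 𝔽) → 𝔽)
    (ord : V → ℕ) (hord : ∀ e : E, ord (tail e) < ord (head e))
    (X : S → 𝔽) (e : E) : 𝔽 :=
  Fenc e (fun a => match a with
    | ⟨Sum.inl s, _⟩ => X s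
    | ⟨Sum.inr e', _h⟩ => runCode tail head Sbar assign Fenc ord hord X e')
termination_by ord (head e)
decreasing_by
  have h1 := head_eq_of_inr_mem_linkIn tail head Sbar assign _h
  rw [h1]
  exact hord e

lemma exists_midpoint {A 𝔽 : Type*} [Fintype A] [DecidableEq A] [DecidableEq 𝔽]
    (c c' : A → 𝔽) (δ : ℕ) (h : hammingDist c c' ≤ 2 * δ) :
    ∃ z : A → 𝔽, hammingDist c z ≤ δ ∧ hammingDist c' z ≤ δ := by
  classical
  set D : Finset A := Finset.univ.filter (fun a => c a ≠ c' a) with hD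
  have hcard : D.card = hammingDist c c' := rfl
  obtain ⟨D1, hD1sub, hD1card⟩ := Finset.exists_subset_card_eq (s := D) (n := D.card - δ) (Nat.sub_le _ _)
  refine ⟨fun a => if a ∈ D1 then c' a else c a, ?_, ?_⟩
  · have hsub : (Finset.univ.filter fun a => c a ≠ if a ∈ D1 then c' a else c a) ⊆ D1 := by
      intro a ha
      simp only [Finset.mem_filter] at ha
      by_contra hc
      simp [hc] at ha
    calc hammingDist c (fun a => if a ∈ D1 then c' a else c a)
        ≤ D1.card := Finset.card_le_card hsub
      _ ≤ δ := by omega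
  · have hsub : (Finset.univ.filter fun a => c' a ≠ if a ∈ D1 then c' a else c a) ⊆ D \ D1 := by
      intro a ha
      rw [Finset.mem_filter] at ha
      rw [Finset.mem_sdiff]
      by_cases hc : a ∈ D1
      · exact absurd (by simp [hc]) ha.2
      · refine ⟨?_, hc⟩
        rw [hD, Finset.mem_filter]
        refine ⟨Finset.mem_univ _, ?_⟩
        intro hcc
        exact ha.2 (by simp [hc, hcc])
    calc hammingDist c' (fun a => if a ∈ D1 then c' a else c a)
        ≤ (D \ D1).card := Finset.card_le_card hsub
      _ = D.card - D1.card := Finset.card_sdiff_of_subset hD1sub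
      _ ≤ δ := by omega

lemma cardbound {ι 𝔽 : Type*} [Fintype ι] [DecidableEq ι] [DecidableEq 𝔽]
    (A B : Finset ι) (f g : ι → 𝔽) (h : ∀ a ∈ A, a ∉ B → f a = g a) :
    hammingDist (proj A f) (proj A g) ≤ B.card := by
  classical
  have : hammingDist (proj A f) (proj A g)
      = (Finset.univ.filter fun a : {a // a ∈ A} => f a.1 ≠ g a.1).card := rfl
  rw [this]
  apply Finset.card_le_card_of_injOn (fun a => a.1)
  · rintro ⟨a, ha⟩ hmem
    simp only [Finset.coe_filter, Finset.mem_coe, Finset.mem_filter, Set.mem_setOf_eq] at hmem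
    by_contra hB
    exact hmem.2 (h a ha hB)
  · rintro ⟨a, ha⟩ _ ⟨b, hb⟩ _ hab
    exact Subtype.ext hab

end Aux

/-- if a (δ,𝔾)-NCLE exists, then after deleting, at every
non-source node `v`, any chosen set `Din v` of at most `min(2δ_v, |In(v)|)`
incoming links (where `δ_v = δ_t` for a terminal `v = t` and
`δ_v = min{δ_e : e outgoing from v}` otherwise), the resulting instance 𝔾′
admits a conventional network code, i.e. a (0,𝔾′)-NCLE. -/
theorem conventional_code_after_deletion
    {𝔽 : Type*} [Field 𝔽] [Fintype 𝔽] [DecidableEq 𝔽]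
    {V E S : Type*} [Fintype V] [Fintype E] [Fintype S]
    [DecidableEq V] [DecidableEq E] [DecidableEq S]
    (tail head : E → V) (Sbar : Finset V) (assign : S → V)
    (Term : Finset V) (Fdem : V → Finset S) (δE : E → ℕ) (δT : V → ℕ)
    (hord : ∃ ord : V → ℕ, ∀ e : E, ord (tail e) < ord (head e))
    (hsrc : ∀ e : E, head e ∉ Sbar)
    (hassign : ∀ s : S, assign s ∈ Sbar)
    (hterm : ∀ e : E, tail e ∉ Term)
    (hNCLE : ∃ (Fenc : (e : E) → ({a // a ∈ linkIn tail head Sbar assign e} → 𝔽) → 𝔽)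
        (Ddec : (t : {v // v ∈ Term}) → ({a // a ∈ termIn (S := S) head t.1} → 𝔽) →
          ({s // s ∈ Fdem t.1} → 𝔽)),
        IsNCLE 𝔽 (linkIn tail head Sbar assign) (termIn head) Term Fdem δE δT Fenc Ddec)
    (Din : V → Finset E)
    (hDsub : ∀ v : V, v ∉ Sbar → Din v ⊆ inLinks head v)
    (hDterm : ∀ v : V, v ∉ Sbar → v ∈ Term →
      (Din v).card ≤ min (2 * δT v) (inLinks head v).card)
    (hDnonterm : ∀ v : V, v ∉ Sbar → v ∉ Term → ∀ e : E, tail e = v →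
      (Din v).card ≤ min (2 * δE e) (inLinks head v).card) :
    ∃ (Fenc' : (e : E) → ({a // a ∈
          (if tail e ∈ Sbar then linkIn tail head Sbar assign e
           else linkIn tail head Sbar assign e \ (Din (tail e)).image Sum.inr)} → 𝔽) → 𝔽)
      (Ddec' : (t : {v // v ∈ Term}) →
        ({a // a ∈ termIn (S := S) head t.1 \ (Din t.1).image Sum.inr} → 𝔽) →
        ({s // s ∈ Fdem t.1} → 𝔽)),
      IsNCLE 𝔽
        (fun e : E => if tail e ∈ Sbar then linkIn tail head Sbar assign e
          else linkIn tail head Sbar assign e \ (Din (tail e)).image Sum.inr)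
        (fun t : V => termIn head t \ (Din t).image Sum.inr)
        Term Fdem (fun _ => 0) (fun _ => 0) Fenc' Ddec' := by
  classical
  obtain ⟨Fenc, Ddec, hN⟩ := hNCLE
  obtain ⟨ord, hord'⟩ := hord
  set run : (S → 𝔽) → E → 𝔽 :=
    fun X => runCode tail head Sbar assign Fenc ord hord' X with hrun
  set xf : (S → 𝔽) → (S ⊕ E) → 𝔽 := fun X => Sum.elim X (run X) with hxf
  have hcons : ∀ X : S → 𝔽, ∀ e : E,
      xf X (Sum.inr e) = Fenc e (proj (linkIn tail head Sbar assign e) (xf X)) := by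
    intro X e
    show runCode tail head Sbar assign Fenc ord hord' X e = _
    rw [runCode]
    congr 1
    funext a
    obtain ⟨a, ha⟩ := a
    cases a with
    | inl s => rfl
    | inr e' => rfl
  have encWD : ∀ (X X' : S → 𝔽) (e : E),
      hammingDist (proj (linkIn tail head Sbar assign e) (xf X))
        (proj (linkIn tail head Sbar assign e) (xf X')) ≤ 2 * δE e →
      run X e = run X' e := by
    intro X X' e hd
    obtain ⟨z, hz1, hz2⟩ := exists_midpoint _ _ _ hd
    have h1 := (hN (xf X) (hcons X)).1 e z hz1
    have h2 := (hN (xf X') (hcons X')).1 e z hz2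
    exact h1.symm.trans h2
  have decWD : ∀ (X X' : S → 𝔽) (t : {v // v ∈ Term}),
      hammingDist (proj (termIn (S := S) head t.1) (xf X))
        (proj (termIn (S := S) head t.1) (xf X')) ≤ 2 * δT t.1 →
      ∀ s : {s // s ∈ Fdem t.1}, X s.1 = X' s.1 := by
    intro X X' t hd s
    obtain ⟨z, hz1, hz2⟩ := exists_midpoint _ _ _ hd
    have h1 := (hN (xf X) (hcons X)).2 t z hz1
    have h2 := (hN (xf X') (hcons X')).2 t z hz2
    exact congrFun (h1.symm.trans h2) s
  refine ⟨fun e y =>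
      if h : ∃ X : S → 𝔽, ∀ a : {a // a ∈ (if tail e ∈ Sbar then linkIn tail head Sbar assign e
          else linkIn tail head Sbar assign e \ (Din (tail e)).image Sum.inr)},
          xf X a.1 = y a
      then run h.choose e else 0,
    fun t y =>
      if h : ∃ X : S → 𝔽, ∀ a : {a // a ∈ termIn (S := S) head t.1 \ (Din t.1).image Sum.inr},
          xf X a.1 = y a
      then fun s => h.choose s.1 else fun _ => 0, ?_⟩
  intro x' hx'
  set Xs : S → 𝔽 := fun s => x' (Sum.inl s) with hXs
  have key : ∀ (n : ℕ) (e : E), ord (head e) < n → x' (Sum.inr e) = run Xs e := by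
    intro n
    induction n with
    | zero => intro e he; exact absurd he (Nat.not_lt_zero _)
    | succ n ih =>
      intro e he
      have hXsmatch : ∀ a : {a // a ∈ (if tail e ∈ Sbar then linkIn tail head Sbar assign e
          else linkIn tail head Sbar assign e \ (Din (tail e)).image Sum.inr)},
          xf Xs a.1 = proj (if tail e ∈ Sbar then linkIn tail head Sbar assign e
          else linkIn tail head Sbar assign e \ (Din (tail e)).image Sum.inr) x' a := by
        rintro ⟨a, ha⟩
        have ha' : a ∈ linkIn tail head Sbar assign e := by
          by_cases hb : tail e ∈ Sbar
          · rw [if_pos hb] at ha; exact ha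
          · rw [if_neg hb] at ha; exact (Finset.mem_sdiff.mp ha).1
        cases a with
        | inl s => rfl
        | inr e' =>
          have hhe : head e' = tail e := head_eq_of_inr_mem_linkIn tail head Sbar assign ha'
          have hlt : ord (head e') < n := by
            have h1 : ord (head e') < ord (head e) := by
              rw [hhe]; exact hord' e
            omega
          exact (ih e' hlt).symm
      have hmatch : ∃ X : S → 𝔽, ∀ a : {a // a ∈ (if tail e ∈ Sbar then linkIn tail head Sbar assign e
          else linkIn tail head Sbar assign e \ (Din (tail e)).image Sum.inr)},
          xf X a.1 = proj (if tail e ∈ Sbar then linkIn tail head Sbar assign e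
          else linkIn tail head Sbar assign e \ (Din (tail e)).image Sum.inr) x' a := ⟨Xs, hXsmatch⟩
      rw [hx' e]
      simp only [dif_pos hmatch]
      refine encWD _ _ e ?_
      by_cases hb : tail e ∈ Sbar
      · refine le_trans (cardbound (linkIn tail head Sbar assign e) ∅ _ _ ?_) (by simp)
        intro a haIn _
        have pf : a ∈ (if tail e ∈ Sbar then linkIn tail head Sbar assign e
            else linkIn tail head Sbar assign e \ (Din (tail e)).image Sum.inr) := by
          rw [if_pos hb]; exact haIn
        exact (hmatch.choose_spec ⟨a, pf⟩).trans (hXsmatch ⟨a, pf⟩).symm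
      · refine le_trans (cardbound (linkIn tail head Sbar assign e)
          ((Din (tail e)).image Sum.inr) _ _ ?_) ?_
        · intro a haIn hB
          have pf : a ∈ (if tail e ∈ Sbar then linkIn tail head Sbar assign e
              else linkIn tail head Sbar assign e \ (Din (tail e)).image Sum.inr) := by
            rw [if_neg hb]; exact Finset.mem_sdiff.mpr ⟨haIn, hB⟩
          exact (hmatch.choose_spec ⟨a, pf⟩).trans (hXsmatch ⟨a, pf⟩).symm
        · calc ((Din (tail e)).image Sum.inr).card ≤ (Din (tail e)).card :=
              Finset.card_image_le
            _ ≤ min (2 * δE e) (inLinks head (tail e)).card :=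
              hDnonterm (tail e) hb (hterm e) e rfl
            _ ≤ 2 * δE e := min_le_left _ _
  constructor
  · intro e yt hdist
    have h0 : proj _ x' = yt := hammingDist_eq_zero.mp (Nat.le_zero.mp hdist)
    rw [← h0]
    exact (hx' e).symm
  · intro t yt hdist
    have h0 : proj _ x' = yt := hammingDist_eq_zero.mp (Nat.le_zero.mp hdist)
    rw [← h0]
    have hXsmatchT : ∀ a : {a // a ∈ termIn (S := S) head t.1 \ (Din t.1).image Sum.inr},
        xf Xs a.1 = proj (termIn (S := S) head t.1 \ (Din t.1).image Sum.inr) x' a := by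
      rintro ⟨a, ha⟩
      have ha' : a ∈ termIn (S := S) head t.1 := (Finset.mem_sdiff.mp ha).1
      simp only [termIn, Finset.mem_image, Finset.mem_filter, Finset.mem_univ, true_and] at ha'
      obtain ⟨e', -, rfl⟩ := ha'
      exact (key (ord (head e') + 1) e' (Nat.lt_succ_self _)).symm
    have hmatch : ∃ X : S → 𝔽, ∀ a : {a // a ∈ termIn (S := S) head t.1 \ (Din t.1).image Sum.inr},
        xf X a.1 = proj (termIn (S := S) head t.1 \ (Din t.1).image Sum.inr) x' a := ⟨Xs, hXsmatchT⟩
    simp only [dif_pos hmatch]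
    have hbound : hammingDist (proj (termIn (S := S) head t.1) (xf hmatch.choose))
        (proj (termIn (S := S) head t.1) (xf Xs)) ≤ 2 * δT t.1 := by
      by_cases hb : t.1 ∈ Sbar
      · refine le_trans (cardbound (termIn (S := S) head t.1) ∅ _ _ ?_) (by simp)
        intro a haIn _
        simp only [termIn, Finset.mem_image, Finset.mem_filter, Finset.mem_univ,
          true_and] at haIn
        obtain ⟨e', he', rfl⟩ := haIn
        exact absurd (he' ▸ hb) (hsrc e')
      · refine le_trans (cardbound (termIn (S := S) head t.1)
          ((Din t.1).image Sum.inr) _ _ ?_) ?_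
        · intro a haIn hB
          have pf : a ∈ termIn (S := S) head t.1 \ (Din t.1).image Sum.inr :=
            Finset.mem_sdiff.mpr ⟨haIn, hB⟩
          exact (hmatch.choose_spec ⟨a, pf⟩).trans (hXsmatchT ⟨a, pf⟩).symm
        · calc ((Din t.1).image Sum.inr).card ≤ (Din t.1).card := Finset.card_image_le
            _ ≤ min (2 * δT t.1) (inLinks head t.1).card := hDterm t.1 hb t.2
            _ ≤ 2 * δT t.1 := min_le_left _ _
    have hagree := decWD hmatch.choose Xs t hbound
    funext s
    exact hagree s
end
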